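/- If f is convex differentiable with L-Lipschitz gradient, then the dual-form lower bound p satisfies p(z_j) = f(z_j) for every interpolation point z_j, where p(y) = max_{λ ∈ Δ_m} [⟨λ, G^T y − f_* + (1/(2L)) d_g⟩ − (1/(2L))‖Gλ‖²]. -/

import Mathlib

open RealInnerProductSpace

section Aux

variable {n : ℕ} {f : EuclideanSpace ℝ (Fin n) → ℝ}
  {f' : EuclideanSpace ℝ (Fin n) → EuclideanSpace ℝ (Fin n)} {L : ℝ}

private lemma line_hasDerivAt (hgrad : ∀ x, HasGradientAt f (f' x) x)
    (x v : EuclideanSpace ℝ (Fin n)) (t : ℝ) :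
    HasDerivAt (fun s : ℝ => f (x + s • v)) ⟪f' (x + t • v), v⟫ t := by
  have h1 : HasDerivAt (fun s : ℝ => x + s • v) v t := by
    simpa using ((hasDerivAt_id t).smul_const v).const_add x
  have h2 := (hgrad (x + t • v)).hasFDerivAt.comp_hasDerivAt t h1
  simp at h2
  exact h2

private lemma descent (hgrad : ∀ x, HasGradientAt f (f' x) x) (hL : 0 < L)
    (hlip : ∀ x y, ‖f' x - f' y‖ ≤ L * ‖x - y‖) (x y : EuclideanSpace ℝ (Fin n)) :
    f y ≤ f x + ⟪f' x, y - x⟫ + L / 2 * ‖y - x‖ ^ 2 := by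
  set v := y - x with hv
  set g : ℝ → ℝ := fun t => f (x + t • v) - t * ⟪f' x, v⟫ - L / 2 * t ^ 2 * ‖v‖ ^ 2 with hg
  have hderiv : ∀ t : ℝ,
      HasDerivAt g (⟪f' (x + t • v), v⟫ - ⟪f' x, v⟫ - L * t * ‖v‖ ^ 2) t := by
    intro t
    have hA := line_hasDerivAt hgrad x v t
    have hB : HasDerivAt (fun s : ℝ => s * ⟪f' x, v⟫) ⟪f' x, v⟫ t := by
      simpa using (hasDerivAt_id t).mul_const (⟪f' x, v⟫ : ℝ)
    have hC : HasDerivAt (fun s : ℝ => L / 2 * s ^ 2 * ‖v‖ ^ 2) (L * t * ‖v‖ ^ 2) t := by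
      have := ((hasDerivAt_pow 2 t).const_mul (L / 2)).mul_const (‖v‖ ^ 2)
      refine this.congr_deriv ?_
      rw [show (2:ℕ) - 1 = 1 from rfl, pow_one]
      ring
    exact (hA.sub hB).sub hC
  have hanti : AntitoneOn g (Set.Icc (0:ℝ) 1) := by
    apply antitoneOn_of_deriv_nonpos (convex_Icc 0 1)
    · have hdiff : Differentiable ℝ g := fun t => (hderiv t).differentiableAt
      exact hdiff.continuous.continuousOn
    · intro t ht
      exact (hderiv t).differentiableAt.differentiableWithinAt
    · intro t ht
      rw [interior_Icc] at ht
      rw [(hderiv t).deriv]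
      have h1 : ⟪f' (x + t • v) - f' x, v⟫ ≤ ‖f' (x + t • v) - f' x‖ * ‖v‖ :=
        real_inner_le_norm _ _
      have h2 : ‖f' (x + t • v) - f' x‖ ≤ L * ‖x + t • v - x‖ := hlip _ _
      have h3 : ‖x + t • v - x‖ = t * ‖v‖ := by
        rw [add_sub_cancel_left, norm_smul, Real.norm_eq_abs, abs_of_pos ht.1]
      rw [inner_sub_left] at h1
      rw [h3] at h2
      nlinarith [norm_nonneg v, norm_nonneg (f' (x + t • v) - f' x), ht.1.le]
  have h01 := hanti (Set.left_mem_Icc.2 zero_le_one) (Set.right_mem_Icc.2 zero_le_one) zero_le_one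
  simp only [hg, zero_smul, add_zero, one_smul, zero_mul, zero_pow, mul_zero, sub_zero,
    one_pow, mul_one, one_mul] at h01
  have hxy : x + v = y := by rw [hv]; abel
  rw [hxy] at h01
  linarith

private lemma first_order (hconv : ConvexOn ℝ Set.univ f)
    (hgrad : ∀ x, HasGradientAt f (f' x) x) (x y : EuclideanSpace ℝ (Fin n)) :
    f x + ⟪f' x, y - x⟫ ≤ f y := by
  set v := y - x with hv
  set g : ℝ → ℝ := fun t => f (x + t • v) with hg
  have hgc : ConvexOn ℝ Set.univ g := by
    have h := hconv.comp_affineMap (AffineMap.lineMap x y)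
    have heq : g = f ∘ (AffineMap.lineMap x y) := by
      funext t
      simp [hg, AffineMap.lineMap_apply, hv]
      congr 1
      abel
    rw [heq]
    simpa using h
  have hd : HasDerivWithinAt g ⟪f' x, v⟫ (Set.Ioi (0:ℝ)) 0 := by
    have := line_hasDerivAt hgrad x v 0
    simp only [zero_smul, add_zero] at this
    exact this.hasDerivWithinAt
  have hs := hgc.le_slope_of_hasDerivWithinAt_Ioi (Set.mem_univ 0) (Set.mem_univ 1) one_pos hd
  rw [slope_def_field] at hs
  simp only [hg, zero_smul, add_zero, one_smul] at hs
  have hxy : x + v = y := by rw [hv]; abel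
  rw [hxy] at hs
  have h1 : ((1:ℝ) - 0) = 1 := by norm_num
  rw [h1, div_one] at hs
  linarith

private lemma interp (hconv : ConvexOn ℝ Set.univ f)
    (hgrad : ∀ x, HasGradientAt f (f' x) x) (hL : 0 < L)
    (hlip : ∀ x y, ‖f' x - f' y‖ ≤ L * ‖x - y‖) (x y : EuclideanSpace ℝ (Fin n)) :
    f x + ⟪f' x, y - x⟫ + 1 / (2 * L) * ‖f' y - f' x‖ ^ 2 ≤ f y := by
  set u := f' y - f' x with hu
  set w := y - (1 / L) • u with hw
  have hA := descent hgrad hL hlip y w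
  have hB := first_order hconv hgrad x w
  have hwy : w - y = -((1 / L) • u) := by rw [hw]; abel
  have hwx : w - x = (y - x) - (1 / L) • u := by rw [hw]; abel
  have hA' : f w ≤ f y - (1 / L) * ⟪f' y, u⟫ + 1 / (2 * L) * ‖u‖ ^ 2 := by
    rw [hwy] at hA
    have h1 : ⟪f' y, -((1 / L) • u)⟫ = -((1 / L) * ⟪f' y, u⟫) := by
      rw [inner_neg_right, real_inner_smul_right]
    have h2 : ‖-((1 / L) • u)‖ ^ 2 = (1 / L) ^ 2 * ‖u‖ ^ 2 := by
      rw [norm_neg, norm_smul, mul_pow, Real.norm_eq_abs, sq_abs]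
    rw [h1, h2] at hA
    have hL' : L ≠ 0 := ne_of_gt hL
    have : L / 2 * ((1 / L) ^ 2 * ‖u‖ ^ 2) = 1 / (2 * L) * ‖u‖ ^ 2 := by
      field_simp
    linarith [hA, this.le, this.ge]
  have hB' : f x + ⟪f' x, y - x⟫ - (1 / L) * ⟪f' x, u⟫ ≤ f w := by
    rw [hwx, inner_sub_right, real_inner_smul_right] at hB
    linarith
  have hinner : ⟪f' y, u⟫ - ⟪f' x, u⟫ = ‖u‖ ^ 2 := by
    rw [← inner_sub_left, ← hu, real_inner_self_eq_norm_sq]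
  have hL' : (0:ℝ) < 1 / L := by positivity
  have key : (1 / L) * (⟪f' y, u⟫ - ⟪f' x, u⟫) = (1 / L) * ‖u‖ ^ 2 := by rw [hinner]
  have h2L : (1 / L) * ‖u‖ ^ 2 - 1 / (2 * L) * ‖u‖ ^ 2 = 1 / (2 * L) * ‖u‖ ^ 2 := by
    field_simp
    ring
  linarith [hA', hB', key, h2L]

end Aux

theorem stmt6 (n m : ℕ) (hm : 0 < m) (f : EuclideanSpace ℝ (Fin n) → ℝ)
    (f' : EuclideanSpace ℝ (Fin n) → EuclideanSpace ℝ (Fin n))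
    (hconv : ConvexOn ℝ Set.univ f)
    (hgrad : ∀ x, HasGradientAt f (f' x) x)
    (L : ℝ) (hL : 0 < L)
    (hlip : ∀ x y, ‖f' x - f' y‖ ≤ L * ‖x - y‖)
    (z : Fin m → EuclideanSpace ℝ (Fin n)) (j : Fin m) :
    (⨆ lam : {l : Fin m → ℝ // l ∈ stdSimplex ℝ (Fin m)},
        ((∑ i, lam.1 i * (⟪f' (z i), z j⟫ - (⟪f' (z i), z i⟫ - f (z i))
              + (1/(2*L)) * ‖f' (z i)‖^2))
          - (1/(2*L)) * ‖∑ i, lam.1 i • f' (z i)‖^2)) = f (z j) := by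
  have hc : (0:ℝ) < 1 / (2 * L) := by positivity
  -- key upper bound
  have key' : ∀ lam : Fin m → ℝ, lam ∈ stdSimplex ℝ (Fin m) →
      ((∑ i, lam i * (⟪f' (z i), z j⟫ - (⟪f' (z i), z i⟫ - f (z i))
            + (1/(2*L)) * ‖f' (z i)‖^2))
        - (1/(2*L)) * ‖∑ i, lam i • f' (z i)‖^2) ≤ f (z j) := by
    rintro lam ⟨hpos, hsum⟩
    set s := ∑ i, lam i • f' (z i) with hs
    have hterm : ∀ i ∈ Finset.univ, lam i * (⟪f' (z i), z j⟫ - (⟪f' (z i), z i⟫ - f (z i))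
          + (1/(2*L)) * ‖f' (z i)‖^2)
        ≤ lam i * (f (z j) + (1/(2*L)) * (2 * ⟪f' (z i), f' (z j)⟫ - ‖f' (z j)‖^2)) := by
      intro i _
      apply mul_le_mul_of_nonneg_left _ (hpos i)
      have h := interp hconv hgrad hL hlip (z i) (z j)
      rw [inner_sub_right] at h
      have hns : ‖f' (z j) - f' (z i)‖ ^ 2
          = ‖f' (z j)‖ ^ 2 - 2 * ⟪f' (z j), f' (z i)⟫ + ‖f' (z i)‖ ^ 2 :=
        norm_sub_sq_real _ _
      have hcomm : ⟪f' (z j), f' (z i)⟫ = ⟪f' (z i), f' (z j)⟫ := real_inner_comm _ _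
      rw [hcomm] at hns
      nlinarith [h, hns]
    have hsum1 : (∑ i, lam i * (f (z j) + (1/(2*L)) * (2 * ⟪f' (z i), f' (z j)⟫ - ‖f' (z j)‖^2)))
        = f (z j) + (1/(2*L)) * (2 * ⟪s, f' (z j)⟫ - ‖f' (z j)‖^2) := by
      have hsi : ⟪s, f' (z j)⟫ = ∑ i, lam i * ⟪f' (z i), f' (z j)⟫ := by
        rw [hs, sum_inner]
        exact Finset.sum_congr rfl fun i _ => real_inner_smul_left _ _ _
      have expand : ∀ i, lam i * (f (z j) + (1/(2*L)) * (2 * ⟪f' (z i), f' (z j)⟫ - ‖f' (z j)‖^2))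
          = f (z j) * lam i + (1/L) * (lam i * ⟪f' (z i), f' (z j)⟫)
            - ((1/(2*L)) * ‖f' (z j)‖^2) * lam i := by
        intro i
        field_simp
        ring
      rw [Finset.sum_congr rfl fun i _ => expand i]
      rw [Finset.sum_sub_distrib, Finset.sum_add_distrib, ← Finset.mul_sum, ← Finset.mul_sum,
        ← Finset.mul_sum, hsum, hsi]
      field_simp
      ring
    have step1 : (∑ i, lam i * (⟪f' (z i), z j⟫ - (⟪f' (z i), z i⟫ - f (z i))
            + (1/(2*L)) * ‖f' (z i)‖^2)) - (1/(2*L)) * ‖s‖^2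
        ≤ f (z j) + (1/(2*L)) * (2 * ⟪s, f' (z j)⟫ - ‖f' (z j)‖^2) - (1/(2*L)) * ‖s‖^2 := by
      have := Finset.sum_le_sum hterm
      rw [hsum1] at this
      linarith
    have hns2 : ‖s - f' (z j)‖ ^ 2 = ‖s‖ ^ 2 - 2 * ⟪s, f' (z j)⟫ + ‖f' (z j)‖ ^ 2 :=
      norm_sub_sq_real _ _
    have hnn : 0 ≤ (1/(2*L)) * ‖s - f' (z j)‖ ^ 2 := by positivity
    have hexp : f (z j) + (1/(2*L)) * (2 * ⟪s, f' (z j)⟫ - ‖f' (z j)‖^2) - (1/(2*L)) * ‖s‖^2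
        = f (z j) - (1/(2*L)) * ‖s - f' (z j)‖^2 := by
      rw [hns2]; ring
    linarith [step1, hnn, hexp]
  have key : ∀ lam : {l : Fin m → ℝ // l ∈ stdSimplex ℝ (Fin m)},
      ((∑ i, lam.1 i * (⟪f' (z i), z j⟫ - (⟪f' (z i), z i⟫ - f (z i))
            + (1/(2*L)) * ‖f' (z i)‖^2))
        - (1/(2*L)) * ‖∑ i, lam.1 i • f' (z i)‖^2) ≤ f (z j) :=
    fun lam => key' lam.1 lam.2
  -- the point e_j in the simplex
  set e : Fin m → ℝ := fun i => if i = j then 1 else 0 with he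
  have hemem : e ∈ stdSimplex ℝ (Fin m) := by
    constructor
    · intro i
      by_cases h : i = j <;> simp [he, h]
    · simp [he]
  haveI : Nonempty {l : Fin m → ℝ // l ∈ stdSimplex ℝ (Fin m)} := ⟨⟨e, hemem⟩⟩
  have hval : ((∑ i, e i * (⟪f' (z i), z j⟫ - (⟪f' (z i), z i⟫ - f (z i))
          + (1/(2*L)) * ‖f' (z i)‖^2))
        - (1/(2*L)) * ‖∑ i, e i • f' (z i)‖^2) = f (z j) := by
    have h1 : (∑ i, e i * (⟪f' (z i), z j⟫ - (⟪f' (z i), z i⟫ - f (z i))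
          + (1/(2*L)) * ‖f' (z i)‖^2))
        = ⟪f' (z j), z j⟫ - (⟪f' (z j), z j⟫ - f (z j)) + (1/(2*L)) * ‖f' (z j)‖^2 := by
      simp [he, ite_mul]
    have h2 : (∑ i, e i • f' (z i)) = f' (z j) := by
      simp [he, ite_smul]
    rw [h1, h2]
    ring
  apply le_antisymm
  · exact ciSup_le key
  · have hbdd : BddAbove (Set.range fun lam : {l : Fin m → ℝ // l ∈ stdSimplex ℝ (Fin m)} =>
        ((∑ i, lam.1 i * (⟪f' (z i), z j⟫ - (⟪f' (z i), z i⟫ - f (z i))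
              + (1/(2*L)) * ‖f' (z i)‖^2))
          - (1/(2*L)) * ‖∑ i, lam.1 i • f' (z i)‖^2)) := by
      refine ⟨f (z j), ?_⟩
      rintro x ⟨lam, rfl⟩
      exact key lam
    have := le_ciSup hbdd (⟨e, hemem⟩ : {l : Fin m → ℝ // l ∈ stdSimplex ℝ (Fin m)})
    rw [hval] at this
    exact this
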